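/- Let m > 1 be a squarefree integer, K = ℚ(√m) (regarded as a subfield of ℝ with √m > 0), ε > 1 a unit of the ring of integers O_K, ξ ∈ K, and k > 0 a real number. If there exists α ∈ O_K with |N_{K/ℚ}(ξ − α)| < k, then there exist η = r + s√m ∈ K (with r, s ∈ ℚ) and j ∈ ℤ such that: (i) η − ξε^j ∈ O_K; (ii) |N_{K/ℚ}(η)| < k; (iii) |r| < μ and |s| < μ/√m, where μ = (√k/2)(√ε + 1/√ε). -/

import Mathlib

open NumberField

lemma quad_repr' {K : Type*} [Field K] [NumberField K] (B : Module.Basis (Fin 2) ℚ K) (a b : ℚ) :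
    B.repr (a • B 0 + b • B 1) 0 = a ∧ B.repr (a • B 0 + b • B 1) 1 = b := by
  simp [Module.Basis.repr_self, Finsupp.single_apply]

lemma rat_smul' {K : Type*} [Field K] [NumberField K] (q : ℚ) (x : K) :
    q • x = (q : K) * x := by
  rw [Algebra.smul_def, eq_ratCast (algebraMap ℚ K)]

lemma quad_norm' {K : Type*} [Field K] [NumberField K] (m : ℕ) (sqrtm : K)
    (hs : sqrtm ^ 2 = m) (B : Module.Basis (Fin 2) ℚ K) (hB0 : B 0 = sqrtm) (hB1 : B 1 = 1)
    (r s : ℚ) :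
    Algebra.norm ℚ ((r : K) + (s : K) * sqrtm) = r ^ 2 - m * s ^ 2 := by
  have e0 : ((r : K) + (s : K) * sqrtm) * B 0 = r • B 0 + (s * m : ℚ) • B 1 := by
    rw [hB0, hB1, rat_smul', rat_smul']
    push_cast
    ring_nf
    rw [hs]
  have e1 : ((r : K) + (s : K) * sqrtm) * B 1 = s • B 0 + r • B 1 := by
    rw [hB0, hB1, rat_smul', rat_smul']
    ring
  rw [Algebra.norm_eq_matrix_det B, Matrix.det_fin_two,
    Algebra.leftMulMatrix_eq_repr_mul, Algebra.leftMulMatrix_eq_repr_mul,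
    Algebra.leftMulMatrix_eq_repr_mul, Algebra.leftMulMatrix_eq_repr_mul, e0, e1,
    (quad_repr' B r (s * m)).1, (quad_repr' B r (s * m)).2,
    (quad_repr' B s r).1, (quad_repr' B s r).2]
  ring

lemma quad_decomp' {K : Type*} [Field K] [NumberField K] (sqrtm : K)
    (B : Module.Basis (Fin 2) ℚ K) (hB0 : B 0 = sqrtm) (hB1 : B 1 = 1) (x : K) :
    x = ((B.repr x 1 : ℚ) : K) + ((B.repr x 0 : ℚ) : K) * sqrtm := by
  conv_lhs => rw [← B.sum_repr x]
  rw [Fin.sum_univ_two, hB0, hB1, rat_smul', rat_smul']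
  ring

lemma unit_norm_abs' {K : Type*} [Field K] [NumberField K] (v : (𝓞 K)ˣ) :
    |Algebra.norm ℚ ((v : 𝓞 K) : K)| = 1 := by
  have := NumberField.isUnit_iff_norm.mp v.isUnit
  rwa [RingOfIntegers.coe_norm] at this

lemma unit_coe_zpow' {K : Type*} [Field K] [NumberField K] (u : (𝓞 K)ˣ) (j : ℤ) :
    (((u ^ j : (𝓞 K)ˣ) : 𝓞 K) : K) = (((u : 𝓞 K) : K)) ^ j := by
  have h : ∀ w : (𝓞 K)ˣ,
      ((w : 𝓞 K) : K) = ((Units.map (algebraMap (𝓞 K) K).toMonoidHom w : Kˣ) : K) :=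
    fun w => rfl
  rw [h, map_zpow, Units.val_zpow_eq_zpow_val, ← h]

lemma key_ineq' {A Bu X Y : ℝ} (hA : 0 < A) (hX1 : A < |X|) (hX2 : |X| ≤ Bu)
    (hXY : |X * Y| < A * Bu) : |X| + |Y| < A + Bu := by
  have h1 : |X| * |Y| < A * Bu := by rwa [← abs_mul]
  have h2 : (0 : ℝ) < |X| := lt_trans hA hX1
  nlinarith [abs_nonneg Y, mul_nonneg (sub_pos.2 hX1).le (sub_nonneg.2 hX2)]


/-- Let `K = ℚ(√m)` (`m > 1` squarefree) be embedded in `ℝ` with `√m > 0`, let `ε > 1`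
be a unit of `𝓞 K`, `ξ ∈ K` and `k > 0`.  If `|N(ξ − α)| < k` for some `α ∈ 𝓞 K`, then
there are `η = r + s√m ∈ K` and `j ∈ ℤ` with `η − ξε^j ∈ 𝓞 K`, `|N(η)| < k`, `|r| < μ`
and `|s| < μ/√m`, where `μ = (√k/2)(√ε + 1/√ε)`. -/
theorem exists_small_representative_quadratic {K : Type*} [Field K] [NumberField K]
    (m : ℕ) (hm : Squarefree m) (h1 : 1 < m)
    (sqrtm : K) (hs : sqrtm ^ 2 = m) (hdeg : Module.finrank ℚ K = 2)
    (φ : K →+* ℝ) (hφ : φ sqrtm = Real.sqrt m)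
    (u : (𝓞 K)ˣ) (hu : 1 < φ ((u : 𝓞 K) : K))
    (ξ : K) (k : ℝ) (hk : 0 < k)
    (h : ∃ α : 𝓞 K, ((|Algebra.norm ℚ (ξ - (α : K))| : ℚ) : ℝ) < k) :
    ∃ r s : ℚ, ∃ j : ℤ,
      (∃ w : 𝓞 K, (r : K) + (s : K) * sqrtm - ξ * ((u : 𝓞 K) : K) ^ j = w) ∧
      ((|Algebra.norm ℚ ((r : K) + (s : K) * sqrtm)| : ℚ) : ℝ) < k ∧
      (|r| : ℝ) < Real.sqrt k / 2 *
          (Real.sqrt (φ ((u : 𝓞 K) : K)) + 1 / Real.sqrt (φ ((u : 𝓞 K) : K))) ∧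
      (|s| : ℝ) < Real.sqrt k / 2 *
          (Real.sqrt (φ ((u : 𝓞 K) : K)) + 1 / Real.sqrt (φ ((u : 𝓞 K) : K))) /
            Real.sqrt m := by
  obtain ⟨α, hα⟩ := h
  set ε : K := ((u : 𝓞 K) : K) with hεdef
  set t : ℝ := φ ε with htdef
  have ht1 : (1 : ℝ) < t := hu
  have ht0 : (0 : ℝ) < t := lt_trans one_pos ht1
  -- irrationality and basis
  have hirrR : Irrational (Real.sqrt m) := by
    refine irrational_sqrt_natCast_iff.mpr ?_
    rintro ⟨d, hd⟩
    have hdu : IsUnit d := hm d ⟨1, by rw [hd]; ring⟩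
    rw [Nat.isUnit_iff] at hdu
    simp [hdu] at hd
    omega
  have hirrK : ∀ q : ℚ, sqrtm ≠ (q : K) := by
    intro q hq
    exact hirrR ⟨q, by rw [← hφ, hq, map_ratCast]⟩
  have hindep : LinearIndependent ℚ ![sqrtm, (1 : K)] := by
    rw [linearIndependent_fin2]
    refine ⟨by simp, fun a ha => ?_⟩
    simp only [Matrix.cons_val_one, Matrix.head_cons, Matrix.cons_val_zero] at ha
    exact hirrK a (by rw [← ha, rat_smul', mul_one])
  obtain ⟨B, hB0, hB1⟩ : ∃ B : Module.Basis (Fin 2) ℚ K, B 0 = sqrtm ∧ B 1 = 1 := by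
    refine ⟨basisOfLinearIndependentOfCardEqFinrank hindep (by simp [hdeg]), ?_, ?_⟩ <;>
      simp [coe_basisOfLinearIndependentOfCardEqFinrank]
  -- real facts
  have hM0 : (0 : ℝ) < Real.sqrt m := Real.sqrt_pos.mpr (by exact_mod_cast Nat.lt_of_lt_of_le Nat.zero_lt_one h1.le)
  have hMM : Real.sqrt m * Real.sqrt m = (m : ℝ) := Real.mul_self_sqrt (by positivity)
  have hsk : 0 < Real.sqrt k := Real.sqrt_pos.mpr hk
  have hskk : Real.sqrt k * Real.sqrt k = k := Real.mul_self_sqrt hk.le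
  have hst : 0 < Real.sqrt t := Real.sqrt_pos.mpr ht0
  have hstt : Real.sqrt t * Real.sqrt t = t := Real.mul_self_sqrt ht0.le
  have hμpos : 0 < Real.sqrt k / 2 * (Real.sqrt t + 1 / Real.sqrt t) := by
    have := one_div_pos.mpr hst
    have h2 : 0 < Real.sqrt k / 2 := by linarith
    exact mul_pos h2 (by linarith)
  by_cases hβ : ξ - (α : K) = 0
  · have hξα : ξ = (α : K) := sub_eq_zero.mp hβ
    refine ⟨0, 0, 0, ⟨-α, ?_⟩, ?_, ?_, ?_⟩
    · push_cast
      rw [hξα]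
      simp
    · rw [show ((0 : ℚ) : K) + ((0 : ℚ) : K) * sqrtm = ((0 : ℚ) : K) + ((0 : ℚ) : K) * sqrtm from rfl,
        quad_norm' m sqrtm hs B hB0 hB1 0 0]
      norm_num [hk]
    · simpa using hμpos
    · simpa using div_pos hμpos hM0
  -- main case
  have hx0 : φ (ξ - (α : K)) ≠ 0 := fun hx => hβ (by
    apply φ.injective
    simpa using hx)
  have hax : 0 < |φ (ξ - (α : K))| := abs_pos.mpr hx0
  set A : ℝ := Real.sqrt k / Real.sqrt t with hA
  set Bu : ℝ := Real.sqrt k * Real.sqrt t with hBu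
  have hApos : 0 < A := div_pos hsk hst
  have hBpos : 0 < Bu := mul_pos hsk hst
  have hABk : A * Bu = k := by
    rw [hA, hBu]
    field_simp
    nlinarith [hskk, hstt]
  have htA : t * A = Bu := by
    rw [hA, hBu]
    field_simp
    linear_combination (-1) * hstt
  have hABμ : (A + Bu) / 2 = Real.sqrt k / 2 * (Real.sqrt t + 1 / Real.sqrt t) := by
    rw [hA, hBu]
    field_simp
    ring
  obtain ⟨n, hn1, hn2⟩ := exists_mem_Ico_zpow (div_pos hApos hax) ht1
  set j : ℤ := n + 1 with hj
  set η : K := (ξ - (α : K)) * ε ^ j with hηdef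
  set r : ℚ := B.repr η 1 with hr
  set s : ℚ := B.repr η 0 with hsdef
  have hdec : η = (r : K) + (s : K) * sqrtm := quad_decomp' sqrtm B hB0 hB1 η
  -- unit powers
  set v : (𝓞 K)ˣ := u ^ j with hv
  have hvK : ((v : 𝓞 K) : K) = ε ^ j := unit_coe_zpow' u j
  -- norm facts
  have hNη : Algebra.norm ℚ η = Algebra.norm ℚ (ξ - (α : K)) * Algebra.norm ℚ ((v : 𝓞 K) : K) := by
    rw [hηdef, ← hvK, map_mul]
  have hNabs : |Algebra.norm ℚ η| = |Algebra.norm ℚ (ξ - (α : K))| := by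
    rw [hNη, abs_mul, unit_norm_abs', mul_one]
  -- real embedding facts
  have htj : φ (ε ^ j) = t ^ j := by rw [map_zpow₀, htdef]
  have htjpos : 0 < t ^ j := zpow_pos ht0 j
  have hXeq : |φ η| = |φ (ξ - (α : K))| * t ^ j := by
    rw [hηdef, map_mul, htj, abs_mul, abs_of_pos htjpos]
  have hzj : t ^ j = t ^ n * t := by rw [hj, zpow_add_one₀ (ne_of_gt ht0)]
  have hXup : |φ η| ≤ Bu := by
    have e1 : t ^ n * |φ (ξ - (α : K))| ≤ A := (le_div_iff₀ hax).mp hn1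
    rw [hXeq, hzj]
    calc |φ (ξ - (α : K))| * (t ^ n * t) = t ^ n * |φ (ξ - (α : K))| * t := by ring
      _ ≤ A * t := mul_le_mul_of_nonneg_right e1 ht0.le
      _ = Bu := by rw [mul_comm]; exact htA
  have hXlow : A < |φ η| := by
    have h2 : A < t ^ j * |φ (ξ - (α : K))| := (div_lt_iff₀ hax).mp hn2
    rw [hXeq, mul_comm]
    exact h2
  -- the conjugate value
  set Y : ℝ := (r : ℝ) - (s : ℝ) * Real.sqrt m with hY
  have hφη : φ η = (r : ℝ) + (s : ℝ) * Real.sqrt m := by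
    conv_lhs => rw [hdec]
    simp [map_add, map_mul, map_ratCast, hφ]
  have hNval : (Algebra.norm ℚ η : ℚ) = r ^ 2 - m * s ^ 2 := by
    conv_lhs => rw [hdec]
    exact quad_norm' m sqrtm hs B hB0 hB1 r s
  have hXYeq : φ η * Y = ((Algebra.norm ℚ η : ℚ) : ℝ) := by
    rw [hφη, hY, hNval]
    push_cast
    linear_combination (-(s : ℝ) ^ 2) * hMM
  have habs : |φ η * Y| < k := by
    have h' : ((|Algebra.norm ℚ η| : ℚ) : ℝ) < k := by rw [hNabs]; exact hα
    rw [hXYeq]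
    exact_mod_cast h'
  have hsum : |φ η| + |Y| < A + Bu :=
    key_ineq' hApos hXlow hXup (by rw [hABk]; exact habs)
  refine ⟨r, s, j, ⟨-(α * (v : 𝓞 K)), ?_⟩, ?_, ?_, ?_⟩
  · rw [← hdec, hηdef]
    push_cast [hvK]
    ring
  · rw [← hdec, hNabs]
    exact hα
  · have hRe : (r : ℝ) = (φ η + Y) / 2 := by rw [hφη, hY]; ring
    calc |(r : ℝ)| = |φ η + Y| / 2 := by rw [hRe, abs_div]; norm_num
      _ ≤ (|φ η| + |Y|) / 2 := by gcongr; exact abs_add_le _ _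
      _ < (A + Bu) / 2 := by linarith
      _ = _ := hABμ
  · have hSe : (s : ℝ) * Real.sqrt m = (φ η - Y) / 2 := by rw [hφη, hY]; ring
    rw [lt_div_iff₀ hM0]
    calc |(s : ℝ)| * Real.sqrt m = |(s : ℝ) * Real.sqrt m| := by
          rw [abs_mul, abs_of_pos hM0]
      _ = |φ η - Y| / 2 := by rw [hSe, abs_div]; norm_num
      _ ≤ (|φ η| + |Y|) / 2 := by gcongr; exact abs_sub _ _
      _ < (A + Bu) / 2 := by linarith
      _ = _ := hABμ
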